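/- arXiv:2106.00070 — 5 statements merged into one kernel-verified Lean document; each statement's English description precedes it below -/
import Mathlib

section
/- Let K be a field of characteristic zero, let A be a finitely generated commutative associative K-algebra without zero divisors, let 𝔲 be a finite-dimensional nilpotent Lie algebra over K, and let D : 𝔲 → Der_K(A) be a Lie algebra homomorphism into the K-derivations of A such that D_y is locally nilpotent for every y ∈ 𝔲. Suppose x ∈ 𝔲 satisfies: D_x ≠ 0, and D_{[y,x]} = 0 for every y ∈ 𝔲. Then there exist elements a₁ ∈ A and a₀ ∈ A with a₀ ≠ 0, D_x(a₁) = a₀, and D_y(a₀) = 0 for all y ∈ 𝔲 (i.e. a₀ is a nonzero 𝔲-invariant in the image of D_x). -/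
/-- Lemma 1 of the paper: for a nilpotent Lie algebra `𝔲` acting on a finitely
generated commutative domain `A` over a characteristic-zero field `K` by locally
nilpotent derivations, if `x ∈ 𝔲` satisfies `D x ≠ 0` and `D ⁅y, x⁆ = 0` for all `y`,
then there are `a₁ ∈ A`, `a₀ ∈ A`, `a₀ ≠ 0`, with `D x a₁ = a₀` and `a₀` a
`𝔲`-invariant. -/
theorem stmt_0
    (K : Type*) [Field K] [CharZero K]
    (A : Type*) [CommRing A] [IsDomain A] [Algebra K A] [Algebra.FiniteType K A]
    (𝔲 : Type*) [LieRing 𝔲] [LieAlgebra K 𝔲]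
    [Module.Finite K 𝔲] [LieRing.IsNilpotent 𝔲]
    (D : 𝔲 →ₗ⁅K⁆ Derivation K A A)
    (hln : ∀ (y : 𝔲) (a : A), ∃ n : ℕ, (⇑(D y))^[n] a = 0)
    (x : 𝔲) (hx : D x ≠ 0)
    (hcentral : ∀ y : 𝔲, D ⁅y, x⁆ = 0) :
    ∃ (a₁ a₀ : A), a₀ ≠ 0 ∧ D x a₁ = a₀ ∧ ∀ y : 𝔲, D y a₀ = 0 := by
  classical
  -- general commutation rule
  have hbr : ∀ (y z : 𝔲) (a : A), D y (D z a) = D z (D y a) + D ⁅y, z⁆ a := by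
    intro y z a
    have h : D ⁅y, z⁆ = ⁅D y, D z⁆ := D.map_lie y z
    have h2 : D ⁅y, z⁆ a = D y (D z a) - D z (D y a) := by
      rw [h]; rfl
    rw [h2]; ring
  -- D y commutes with D x
  have hcomm : ∀ (y : 𝔲) (a : A), D y (D x a) = D x (D y a) := by
    intro y a
    have := hbr y x a
    rw [hcentral y] at this
    simpa using this
  -- main induction on the lower central series
  have main : ∀ i : ℕ, ∀ b : A, b ≠ 0 → (∃ c, D x c = b) →
      (∀ w ∈ LieModule.lowerCentralSeries K 𝔲 𝔲 i, D w b = 0) →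
      ∃ b', b' ≠ 0 ∧ (∃ c, D x c = b') ∧ ∀ y : 𝔲, D y b' = 0 := by
    intro i
    induction i with
    | zero =>
      intro b hb hQ hkill
      exact ⟨b, hb, hQ, fun y => hkill y (by simp [lowerCentralSeries])⟩
    | succ i ih =>
      intro b hb hQ hkill
      -- inner: kill a finite set of elements of the i-th term
      have inner : ∀ s : Finset 𝔲, (∀ y ∈ s, y ∈ LieModule.lowerCentralSeries K 𝔲 𝔲 i) →
          ∀ b : A, b ≠ 0 → (∃ c, D x c = b) →
          (∀ w ∈ LieModule.lowerCentralSeries K 𝔲 𝔲 (i+1), D w b = 0) →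
          ∃ b', b' ≠ 0 ∧ (∃ c, D x c = b') ∧
            (∀ w ∈ LieModule.lowerCentralSeries K 𝔲 𝔲 (i+1), D w b' = 0) ∧
            ∀ y ∈ s, D y b' = 0 := by
        intro s
        induction s using Finset.induction_on with
        | empty =>
          intro _ b hb hQ hk
          exact ⟨b, hb, hQ, hk, by simp⟩
        | @insert z s hz ihs =>
          intro hsub b hb hQ hk
          obtain ⟨b', hb', hQ', hk', hkills⟩ :=
            ihs (fun y hy => hsub y (Finset.mem_insert_of_mem hy)) b hb hQ hk
          have hzmem : z ∈ LieModule.lowerCentralSeries K 𝔲 𝔲 i := hsub z (Finset.mem_insert_self z s)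
          -- applying D z preserves all the properties except nonvanishing
          have hstep : ∀ m : A, ((∃ c, D x c = m) ∧
              (∀ w ∈ LieModule.lowerCentralSeries K 𝔲 𝔲 (i+1), D w m = 0) ∧
              (∀ y ∈ s, D y m = 0)) →
              ((∃ c, D x c = D z m) ∧
              (∀ w ∈ LieModule.lowerCentralSeries K 𝔲 𝔲 (i+1), D w (D z m) = 0) ∧
              (∀ y ∈ s, D y (D z m) = 0)) := by
            rintro m ⟨⟨c, hc⟩, hkm, hsm⟩
            refine ⟨⟨D z c, by rw [← hc, hcomm]⟩, ?_, ?_⟩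
            · intro w hw
              have hbrmem : ⁅w, z⁆ ∈ LieModule.lowerCentralSeries K 𝔲 𝔲 (i+1) := by
                have h1 : ⁅z, w⁆ ∈ LieModule.lowerCentralSeries K 𝔲 𝔲 (i+1) :=
                  (LieModule.lowerCentralSeries K 𝔲 𝔲 (i+1)).lie_mem hw
                have hneg : ⁅w, z⁆ = -⁅z, w⁆ := by rw [lie_skew]
                rw [hneg]; exact neg_mem h1
              rw [hbr w z m, hkm w hw, hkm _ hbrmem]
              simp
            · intro y hy
              have hymem : y ∈ LieModule.lowerCentralSeries K 𝔲 𝔲 i := hsub y (Finset.mem_insert_of_mem hy)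
              have hbrmem : ⁅y, z⁆ ∈ LieModule.lowerCentralSeries K 𝔲 𝔲 (i+1) := by
                rw [LieModule.lowerCentralSeries_succ]
                exact LieSubmodule.lie_mem_lie (LieSubmodule.mem_top y) hzmem
              rw [hbr y z m, hsm y hy, hkm _ hbrmem]
              simp
          -- iterates of D z preserve the properties
          have hiter : ∀ j : ℕ, ((∃ c, D x c = (⇑(D z))^[j] b') ∧
              (∀ w ∈ LieModule.lowerCentralSeries K 𝔲 𝔲 (i+1), D w ((⇑(D z))^[j] b') = 0) ∧
              (∀ y ∈ s, D y ((⇑(D z))^[j] b') = 0)) := by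
            intro j
            induction j with
            | zero => exact ⟨hQ', hk', hkills⟩
            | succ j ihj =>
              rw [Function.iterate_succ_apply']
              exact hstep _ ihj
          -- choose maximal nonvanishing iterate
          have hex : ∃ n : ℕ, (⇑(D z))^[n] b' = 0 := hln z b'
          have hm0 : Nat.find hex ≠ 0 := by
            intro h0
            have := Nat.find_spec hex
            rw [h0] at this
            exact hb' this
          obtain ⟨n, hn⟩ := Nat.exists_eq_succ_of_ne_zero hm0
          refine ⟨(⇑(D z))^[n] b', ?_, (hiter n).1, (hiter n).2.1, ?_⟩
          · exact Nat.find_min hex (by omega)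
          · intro y hy
            rcases Finset.mem_insert.mp hy with hyz | hys
            · subst hyz
              have h2 := Nat.find_spec hex
              rw [hn, Nat.succ_eq_add_one] at h2
              rwa [Function.iterate_succ_apply'] at h2
            · exact (hiter n).2.2 y hys
      -- the i-th term is finitely generated; take a finite spanning set
      obtain ⟨s, hs⟩ := IsNoetherian.noetherian (LieModule.lowerCentralSeries K 𝔲 𝔲 i).toSubmodule
      have hsub : ∀ y ∈ s, y ∈ LieModule.lowerCentralSeries K 𝔲 𝔲 i := by
        intro y hy
        have : y ∈ (LieModule.lowerCentralSeries K 𝔲 𝔲 i).toSubmodule := by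
          rw [← hs]; exact Submodule.subset_span hy
        exact this
      obtain ⟨b', hb', hQ', hk', hkills⟩ := inner s hsub b hb hQ hkill
      refine ih b' hb' hQ' ?_
      intro w hw
      have hw' : w ∈ Submodule.span K (s : Set 𝔲) := by rw [hs]; exact hw
      refine Submodule.span_induction (fun y hy => hkills y hy) ?_ ?_ ?_ hw'
      · simp
      · intro u v _ _ hu hv
        rw [map_add]
        simp [hu, hv]
      · intro c u _ hu
        rw [map_smul]
        simp [hu]
  -- apply with the nilpotency index
  obtain ⟨k, hk⟩ := LieModule.IsNilpotent.nilpotent K 𝔲 𝔲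
  obtain ⟨a, ha⟩ : ∃ a, D x a ≠ 0 := by
    by_contra h
    push_neg at h
    exact hx (by ext a; simpa using h a)
  obtain ⟨b', hb', ⟨c, hc⟩, hinv⟩ := main k (D x a) ha ⟨a, rfl⟩ (by
    intro w hw
    rw [hk] at hw
    have : w = 0 := by simpa using hw
    simp [this])
  exact ⟨c, b', hb', hc, hinv⟩
end

section
/- Let K be a field of characteristic zero, A a commutative K-algebra, D a locally nilpotent K-derivation of A, and Q ∈ A an element with D(Q) = 1. Define S : A → A by S(a) = Σ_{k≥0} (−1)^k (k!)^{−1} Q^k D^k(a) (a finite sum by local nilpotence of D). Then S is a homomorphism of K-algebras: S(a + b) = S(a) + S(b), S(ab) = S(a)S(b), S(λ·a) = λ·S(a) for λ ∈ K, and S(1) = 1. -/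
open Finset in
theorem my_iter_leibniz {K A : Type*} [CommRing K] [CommRing A] [Algebra K A]
    (D : Derivation K A A) (n : ℕ) (p q : A) :
    (⇑D)^[n] (p * q) =
      ∑ k ∈ Finset.range n.succ, n.choose k • ((⇑D)^[n - k] p * (⇑D)^[k] q) := by
  induction n with
  | zero => simp [Finset.range]
  | succ n IH =>
    have hmul : ∀ x y : A, D (x * y) = D x * y + x * D y := by
      intro x y
      rw [D.leibniz]; simp [smul_eq_mul]; ring
    calc
      (⇑D)^[n + 1] (p * q) =
          D (∑ k ∈ range n.succ,
              n.choose k • ((⇑D)^[n - k] p * (⇑D)^[k] q)) := by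
        rw [Function.iterate_succ_apply', IH]
      _ = (∑ k ∈ range n.succ,
            n.choose k • ((⇑D)^[n - k + 1] p * (⇑D)^[k] q)) +
          ∑ k ∈ range n.succ,
            n.choose k • ((⇑D)^[n - k] p * (⇑D)^[k + 1] q) := by
        rw [map_sum]
        simp_rw [map_nsmul, hmul, Function.iterate_succ_apply', smul_add, sum_add_distrib]
      _ = (∑ k ∈ range n.succ,
                n.choose k.succ • ((⇑D)^[n - k] p * (⇑D)^[k + 1] q)) +
              1 • ((⇑D)^[n + 1] p * (⇑D)^[0] q) +
            ∑ k ∈ range n.succ, n.choose k • ((⇑D)^[n - k] p * (⇑D)^[k + 1] q) :=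
        ?_
      _ = ((∑ k ∈ range n.succ, n.choose k • ((⇑D)^[n - k] p * (⇑D)^[k + 1] q)) +
              ∑ k ∈ range n.succ,
                n.choose k.succ • ((⇑D)^[n - k] p * (⇑D)^[k + 1] q)) +
            1 • ((⇑D)^[n + 1] p * (⇑D)^[0] q) := by
        rw [add_comm, add_assoc]
      _ = (∑ i ∈ range n.succ,
              (n + 1).choose (i + 1) • ((⇑D)^[n + 1 - (i + 1)] p * (⇑D)^[i + 1] q)) +
            1 • ((⇑D)^[n + 1] p * (⇑D)^[0] q) := by
        simp_rw [Nat.choose_succ_succ, Nat.succ_sub_succ, add_smul, sum_add_distrib]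
      _ = ∑ k ∈ range n.succ.succ,
            n.succ.choose k • ((⇑D)^[n.succ - k] p * (⇑D)^[k] q) := by
        rw [sum_range_succ' _ n.succ, Nat.choose_zero_right, tsub_zero]
    congr
    refine (sum_range_succ' _ _).trans (congr_arg₂ (· + ·) ?_ ?_)
    · rw [sum_range_succ, Nat.choose_succ_self, zero_smul, add_zero]
      refine sum_congr rfl fun k hk => ?_
      rw [mem_range] at hk
      congr
      omega
    · rw [Nat.choose_zero_right, tsub_zero]

/-- For a locally nilpotent derivation `D` of a commutative `K`-algebra `A`
(char K = 0) and `Q ∈ A` with `D Q = 1`, the map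
`S a = Σ_{k≥0} (−1)^k (k!)⁻¹ Q^k D^k a` (a finite sum by local nilpotence)
is a `K`-algebra homomorphism. -/
theorem stmt_2
    (K : Type*) [Field K] [CharZero K]
    (A : Type*) [CommRing A] [Algebra K A]
    (D : Derivation K A A) (hD : ∀ a : A, ∃ n : ℕ, (⇑D)^[n] a = 0)
    (Q : A) (hQ : D Q = 1)
    (S : A → A)
    (hS : ∀ (a : A) (n : ℕ), (⇑D)^[n] a = 0 →
      S a = ∑ k ∈ Finset.range n,
        ((-1 : K) ^ k * (k.factorial : K)⁻¹) • (Q ^ k * (⇑D)^[k] a)) :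
    (∀ a b : A, S (a + b) = S a + S b) ∧
    (∀ a b : A, S (a * b) = S a * S b) ∧
    (∀ (c : K) (a : A), S (c • a) = c • S a) ∧
    S 1 = 1 := by
  classical
  set c : ℕ → K := fun k => (-1 : K) ^ k * (k.factorial : K)⁻¹ with hc
  have hiter0 : ∀ k : ℕ, (⇑D)^[k] (0 : A) = 0 := fun k =>
    Function.iterate_fixed (map_zero D) k
  have hstab : ∀ (x : A) (n m : ℕ), n ≤ m → (⇑D)^[n] x = 0 → (⇑D)^[m] x = 0 := by
    intro x n m hnm h0
    obtain ⟨k, rfl⟩ := Nat.exists_eq_add_of_le hnm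
    rw [add_comm, Function.iterate_add_apply, h0, hiter0]
  have hitadd : ∀ (x y : A) (k : ℕ), (⇑D)^[k] (x + y) = (⇑D)^[k] x + (⇑D)^[k] y := by
    intro x y k
    induction k generalizing x y with
    | zero => simp
    | succ k ih => simp [Function.iterate_succ_apply, map_add, ih]
  have hitsmul : ∀ (r : K) (x : A) (k : ℕ), (⇑D)^[k] (r • x) = r • (⇑D)^[k] x := by
    intro r x k
    induction k generalizing x with
    | zero => simp
    | succ k ih => simp [Function.iterate_succ_apply, D.map_smul, ih]
  refine ⟨?_, ?_, ?_, ?_⟩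
  · -- additivity
    intro a b
    obtain ⟨na, ha⟩ := hD a
    obtain ⟨nb, hb⟩ := hD b
    set n := max na nb
    have ha' : (⇑D)^[n] a = 0 := hstab a na n (le_max_left _ _) ha
    have hb' : (⇑D)^[n] b = 0 := hstab b nb n (le_max_right _ _) hb
    have hab : (⇑D)^[n] (a + b) = 0 := by rw [hitadd, ha', hb', add_zero]
    rw [hS (a + b) n hab, hS a n ha', hS b n hb', ← Finset.sum_add_distrib]
    refine Finset.sum_congr rfl fun k _ => ?_
    rw [hitadd, mul_add, smul_add]
  · -- multiplicativity
    intro a b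
    obtain ⟨na, ha⟩ := hD a
    obtain ⟨nb, hb⟩ := hD b
    set N := na + nb with hN
    set t : ℕ → ℕ → A :=
      fun i j => (c i * c j) • (Q ^ i * (⇑D)^[i] a * (Q ^ j * (⇑D)^[j] b)) with htdef
    have ht0a : ∀ i j, na ≤ i → t i j = 0 := by
      intro i j hi
      simp [htdef, hstab a na i hi ha]
    have ht0b : ∀ i j, nb ≤ j → t i j = 0 := by
      intro i j hj
      simp [htdef, hstab b nb j hj hb]
    have hab : (⇑D)^[N] (a * b) = 0 := by
      rw [my_iter_leibniz]
      refine Finset.sum_eq_zero fun k hk => ?_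
      by_cases hkb : nb ≤ k
      · rw [hstab b nb k hkb hb, mul_zero, smul_zero]
      · have : na ≤ N - k := by omega
        rw [hstab a na (N - k) this ha, zero_mul, smul_zero]
    have hcast : ∀ m k : ℕ, k ≤ m → c m * (m.choose k : K) = c (m - k) * c k := by
      intro m k hk
      have h1 : ((m.choose k : ℕ) : K) =
          (m.factorial : K) / ((k.factorial : K) * ((m - k).factorial : K)) :=
        Nat.cast_choose K hk
      have h2 : ((-1 : K)) ^ m = (-1 : K) ^ (m - k) * (-1 : K) ^ k := by
        rw [← pow_add, Nat.sub_add_cancel hk]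
      have hm0 : (m.factorial : K) ≠ 0 := Nat.cast_ne_zero.mpr m.factorial_ne_zero
      have hk0 : (k.factorial : K) ≠ 0 := Nat.cast_ne_zero.mpr k.factorial_ne_zero
      have hmk0 : ((m - k).factorial : K) ≠ 0 := Nat.cast_ne_zero.mpr (m - k).factorial_ne_zero
      rw [hc]
      simp only
      rw [h1, h2]
      field_simp
    have e1 : S (a * b) = ∑ m ∈ Finset.range N, ∑ k ∈ Finset.range (m + 1), t (m - k) k := by
      rw [hS (a * b) N hab]
      refine Finset.sum_congr rfl fun m _ => ?_
      rw [my_iter_leibniz, Finset.mul_sum, Finset.smul_sum]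
      refine Finset.sum_congr rfl fun k hk => ?_
      have hk' : k ≤ m := Nat.lt_succ_iff.mp (Finset.mem_range.mp hk)
      have hnsmul : (m.choose k) • ((⇑D)^[m - k] a * (⇑D)^[k] b) =
          ((m.choose k : ℕ) : K) • ((⇑D)^[m - k] a * (⇑D)^[k] b) :=
        (Nat.cast_smul_eq_nsmul K _ _).symm
      rw [hnsmul, mul_smul_comm, smul_smul, htdef]
      simp only
      rw [hcast m k hk']
      congr 1
      have hQm : Q ^ m = Q ^ (m - k) * Q ^ k := by
        rw [← pow_add, Nat.sub_add_cancel hk']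
      rw [hQm]; ring
    have e2 : ∑ m ∈ Finset.range N, ∑ k ∈ Finset.range (m + 1), t (m - k) k =
        ∑ m ∈ Finset.range N, ∑ k ∈ Finset.range (N - m), t k m :=
      Finset.sum_range_diag_flip N (fun i j => t j i)
    have e3 : ∑ m ∈ Finset.range N, ∑ k ∈ Finset.range (N - m), t k m =
        ∑ j ∈ Finset.range nb, ∑ i ∈ Finset.range na, t i j := by
      rw [← Finset.sum_subset (Finset.range_subset_range.mpr (Nat.le_add_left nb na))]
      · refine Finset.sum_congr rfl fun m hm => ?_
        have hm' : m < nb := Finset.mem_range.mp hm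
        refine (Finset.sum_subset (Finset.range_subset_range.mpr (by omega)) ?_).symm
        intro j _ hj
        exact ht0a j m (by simpa using hj)
      · intro m _ hm
        have : nb ≤ m := by simpa using hm
        exact Finset.sum_eq_zero fun j _ => ht0b j m this
    rw [e1, e2, e3, hS a na ha, hS b nb hb, Finset.sum_mul_sum, Finset.sum_comm]
    refine Finset.sum_congr rfl fun i _ => Finset.sum_congr rfl fun j _ => ?_
    rw [htdef]
    simp only
    rw [smul_mul_smul_comm]
  · -- K-linearity
    intro r a
    obtain ⟨n, ha⟩ := hD a
    have hra : (⇑D)^[n] (r • a) = 0 := by rw [hitsmul, ha, smul_zero]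
    rw [hS (r • a) n hra, hS a n ha, Finset.smul_sum]
    refine Finset.sum_congr rfl fun k _ => ?_
    rw [hitsmul, mul_smul_comm, smul_comm]
  · -- S 1 = 1
    have h1 : (⇑D)^[1] (1 : A) = 0 := by simp
    rw [hS 1 1 h1]
    simp
end

section
/- Let K be a field of characteristic zero, A a commutative K-algebra, D a locally nilpotent K-derivation of A, Q ∈ A with D(Q) = 1, and S : A → A the map S(a) = Σ_{k≥0} (−1)^k (k!)^{−1} Q^k D^k(a). Then S(Q) = 0, and the set {a ∈ A : S(a) = 0} equals the ideal of A generated by Q. -/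
/-- For a locally nilpotent derivation `D` with `D Q = 1` and
`S a = Σ_{k≥0} (−1)^k (k!)⁻¹ Q^k D^k a`, one has `S Q = 0` and the kernel of `S`
is exactly the ideal of `A` generated by `Q`. -/
theorem stmt_4
    (K : Type*) [Field K] [CharZero K]
    (A : Type*) [CommRing A] [Algebra K A]
    (D : Derivation K A A) (hD : ∀ a : A, ∃ n : ℕ, (⇑D)^[n] a = 0)
    (Q : A) (hQ : D Q = 1)
    (S : A → A)
    (hS : ∀ (a : A) (n : ℕ), (⇑D)^[n] a = 0 →
      S a = ∑ k ∈ Finset.range n,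
        ((-1 : K) ^ k * (k.factorial : K)⁻¹) • (Q ^ k * (⇑D)^[k] a)) :
    S Q = 0 ∧ {a : A | S a = 0} = (Ideal.span ({Q} : Set A) : Set A) := by
  -- Key iterate formula
  have iter : ∀ (b : A) (k : ℕ),
      (⇑D)^[k+1] (Q * b) = Q * (⇑D)^[k+1] b + (k+1) • (⇑D)^[k] b := by
    intro b k
    induction k with
    | zero =>
      simp [Derivation.leibniz, hQ, smul_eq_mul, mul_comm]
    | succ n ih =>
      rw [Function.iterate_succ_apply' (⇑D) (n+1) (Q*b), ih, map_add, Derivation.leibniz, hQ,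
        map_nsmul, ← Function.iterate_succ_apply' (⇑D) (n+1) b,
        ← Function.iterate_succ_apply' (⇑D) n b]
      simp only [smul_eq_mul, mul_one, one_mul, succ_nsmul]
      abel
  -- S kills multiples of Q
  have key : ∀ b : A, S (Q * b) = 0 := by
    intro b
    obtain ⟨n, hn⟩ := hD b
    have h0 : (⇑D)^[n+1] (Q * b) = 0 := by
      rw [iter b n, hn, Function.iterate_succ_apply', hn]
      simp
    rw [hS _ (n+1) h0]
    set f : ℕ → A := fun k =>
      ((-1 : K) ^ k * (k.factorial : K)⁻¹) • (Q ^ (k+1) * (⇑D)^[k] b) with hf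
    have hterm : ∀ k, ((-1 : K) ^ (k+1) * ((k+1).factorial : K)⁻¹) •
        (Q ^ (k+1) * (⇑D)^[k+1] (Q * b)) = f (k+1) - f k := by
      intro k
      rw [iter b k, mul_add, smul_add]
      have h1 : ((-1 : K) ^ (k+1) * ((k+1).factorial : K)⁻¹) •
          (Q ^ (k+1) * (Q * (⇑D)^[k+1] b)) = f (k+1) := by
        simp only [hf]
        ring_nf
      have h2 : ((-1 : K) ^ (k+1) * ((k+1).factorial : K)⁻¹) •
          (Q ^ (k+1) * ((k+1) • (⇑D)^[k] b)) = - f k := by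
        rw [← Nat.cast_smul_eq_nsmul K (k+1), mul_smul_comm, smul_smul]
        simp only [hf, ← neg_smul]
        congr 1
        have hf0 : ((k.factorial : K)) ≠ 0 :=
          Nat.cast_ne_zero.mpr (Nat.factorial_ne_zero k)
        have hfz : (((k+1).factorial : K)) ≠ 0 :=
          Nat.cast_ne_zero.mpr (Nat.factorial_ne_zero (k+1))
        field_simp
        rw [Nat.factorial_succ]
        push_cast
        ring
      rw [h1, h2]
      abel
    rw [Finset.sum_range_succ']
    have hsum : ∑ k ∈ Finset.range n,
        ((-1 : K) ^ (k+1) * ((k+1).factorial : K)⁻¹) •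
          (Q ^ (k+1) * (⇑D)^[k+1] (Q * b)) = f n - f 0 := by
      rw [Finset.sum_congr rfl (fun k _ => hterm k)]
      exact Finset.sum_range_sub f n
    rw [hsum]
    have h00 : ((-1 : K) ^ 0 * ((0 : ℕ).factorial : K)⁻¹) •
        (Q ^ 0 * (⇑D)^[0] (Q * b)) = f 0 := by
      simp [hf]
    rw [h00]
    have hfn : f n = 0 := by simp [hf, hn]
    rw [hfn]
    abel
  have hSQ : S Q = 0 := by
    have := key 1
    rwa [mul_one] at this
  refine ⟨hSQ, ?_⟩
  ext a
  simp only [Set.mem_setOf_eq, SetLike.mem_coe, Ideal.mem_span_singleton]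
  constructor
  · intro ha
    obtain ⟨n, hn⟩ := hD a
    cases n with
    | zero =>
      simp only [Function.iterate_zero, id_eq] at hn
      exact hn ▸ dvd_zero Q
    | succ m =>
      have hsa := hS a (m+1) hn
      rw [Finset.sum_range_succ'] at hsa
      have hdvd : Q ∣ ∑ k ∈ Finset.range m,
          ((-1 : K) ^ (k+1) * ((k+1).factorial : K)⁻¹) • (Q ^ (k+1) * (⇑D)^[k+1] a) := by
        refine Finset.dvd_sum fun k _ => ?_
        refine ⟨((-1 : K) ^ (k+1) * ((k+1).factorial : K)⁻¹) • (Q ^ k * (⇑D)^[k+1] a), ?_⟩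
        rw [mul_smul_comm]
        congr 1
        ring
      obtain ⟨c, hc⟩ := hdvd
      rw [hc, ha] at hsa
      simp only [pow_zero, Nat.factorial_zero, Nat.cast_one, inv_one, mul_one, one_mul,
        one_smul, Function.iterate_zero, id_eq] at hsa
      exact ⟨-c, by linear_combination -hsa⟩
  · rintro ⟨b, rfl⟩
    exact key b
end

section
/- Let K be a field of characteristic zero, A a commutative K-algebra, and let D₁, …, D_k be locally nilpotent K-derivations of A together with elements Q₁, …, Q_k ∈ A satisfying D_i(Q_j) = 0 whenever i > j and D_j(Q_j) = 1 for each j. For each j let S_j : A → A be the map S_j(a) = Σ_{r≥0} (−1)^r (r!)^{−1} Q_j^r D_j^r(a), and set P = S₁ ∘ S₂ ∘ ⋯ ∘ S_k. Then P(Q_j) = 0 for every 1 ≤ j ≤ k, and consequently the ideal of A generated by Q₁, …, Q_k is contained in the kernel of P. -/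
set_option linter.unusedSectionVars false
open Finset Nat

section Aux

variable {K A : Type*} [Field K] [CharZero K] [CommRing A] [Algebra K A]


theorem myIterLeibniz (D : Derivation K A A) (n : ℕ) (a b : A) :
    (⇑D)^[n] (a * b) = ∑ ij ∈ antidiagonal n,
      n.choose ij.1 • ((⇑D)^[ij.1] a * (⇑D)^[ij.2] b) := by
  induction n with
  | zero => simp
  | succ n ih =>
    rw [Finset.sum_antidiagonal_choose_succ_nsmul (M := A)
      (fun i j => (⇑D)^[i] a * (⇑D)^[j] b) n]
    have hmul : ∀ x y : A, D (x * y) = (D x * y) + (x * D y) := by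
      intro x y; rw [D.leibniz]; ring_nf
    simp only [Function.iterate_succ_apply', ih, map_sum, map_nsmul, hmul, smul_add,
      sum_add_distrib]
    rw [add_comm]
    congr 1
    refine sum_congr rfl fun ⟨i, j⟩ hij ↦ ?_
    rw [n.choose_symm_of_eq_add (Finset.HasAntidiagonal.mem_antidiagonal.1 hij).symm]

theorem myIterLeibniz' (D : Derivation K A A) (n : ℕ) (a b : A) :
    (⇑D)^[n] (a * b) = ∑ i ∈ range (n + 1),
      n.choose i • ((⇑D)^[i] a * (⇑D)^[n - i] b) :=
  (myIterLeibniz D n a b).trans <|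
    Finset.Nat.sum_antidiagonal_eq_sum_range_succ
      (fun i j ↦ n.choose i • ((⇑D)^[i] a * (⇑D)^[j] b)) n

theorem myTriangle {M : Type*} [AddCommMonoid M] (N : ℕ) (f : ℕ → ℕ → M)
    (hf : ∀ s t, N ≤ s + t → f s t = 0) :
    ∑ r ∈ range N, ∑ s ∈ range (r + 1), f s (r - s)
      = ∑ s ∈ range N, ∑ t ∈ range N, f s t := by
  have h1 : ∀ s ∈ range N, ∑ t ∈ range N, f s t = ∑ t ∈ range (N - s), f s t := by
    intro s hs
    refine (Finset.sum_subset (by intro t ht; simp at *; omega) ?_).symm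
    intro t ht ht'
    exact hf s t (by simp at ht ht'; omega)
  rw [Finset.sum_congr rfl h1, Finset.sum_sigma', Finset.sum_sigma']
  refine Finset.sum_nbij' (fun p => ⟨p.2, p.1 - p.2⟩) (fun p => ⟨p.1 + p.2, p.1⟩)
    ?_ ?_ ?_ ?_ ?_
  · rintro ⟨r, s⟩ h; simp only [Finset.mem_sigma, Finset.mem_range] at *; omega
  · rintro ⟨s, t⟩ h; simp only [Finset.mem_sigma, Finset.mem_range] at *; omega
  · rintro ⟨r, s⟩ h
    simp only [Finset.mem_sigma, Finset.mem_range] at h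
    have : s + (r - s) = r := by omega
    simp [Sigma.ext_iff, this]
  · rintro ⟨s, t⟩ h
    simp only [Finset.mem_sigma, Finset.mem_range] at h
    simp [Sigma.ext_iff]
  · rintro ⟨r, s⟩ h; rfl

section
variable (D : Derivation K A A) (Q : A) (S : A → A)

theorem myIterAdd (n : ℕ) (a b : A) : (⇑D)^[n] (a + b) = (⇑D)^[n] a + (⇑D)^[n] b := by
  induction n with
  | zero => simp
  | succ n ih => simp [Function.iterate_succ_apply', ih, map_add]

theorem myIterZero (n : ℕ) : (⇑D)^[n] (0 : A) = 0 :=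
  Function.iterate_fixed (map_zero D) n

theorem myIterStable {n m : ℕ} {a : A} (h : (⇑D)^[n] a = 0) (hnm : n ≤ m) :
    (⇑D)^[m] a = 0 := by
  have : m = (m - n) + n := by omega
  rw [this, Function.iterate_add_apply, h, myIterZero]

variable (hS : ∀ (a : A) (n : ℕ), (⇑D)^[n] a = 0 →
      S a = ∑ r ∈ Finset.range n,
        ((-1 : K) ^ r * (r.factorial : K)⁻¹) • (Q ^ r * (⇑D)^[r] a))

include hS

theorem myS_zero : S 0 = 0 := by
  rw [hS 0 0 (by simp)]; simp

theorem myS_add (a b : A) (na nb : ℕ) (ha : (⇑D)^[na] a = 0) (hb : (⇑D)^[nb] b = 0) :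
    S (a + b) = S a + S b := by
  set n := max na nb with hn
  have ha' : (⇑D)^[n] a = 0 := myIterStable D ha (le_max_left _ _)
  have hb' : (⇑D)^[n] b = 0 := myIterStable D hb (le_max_right _ _)
  have hab : (⇑D)^[n] (a + b) = 0 := by rw [myIterAdd, ha', hb', add_zero]
  rw [hS _ n hab, hS _ n ha', hS _ n hb', ← Finset.sum_add_distrib]
  refine Finset.sum_congr rfl fun r _ => ?_
  rw [myIterAdd, mul_add, smul_add]

theorem myS_mul (a b : A) (na nb : ℕ) (ha : (⇑D)^[na] a = 0) (hb : (⇑D)^[nb] b = 0) :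
    S (a * b) = S a * S b := by
  set N := na + nb with hN
  have ha' : (⇑D)^[N] a = 0 := myIterStable D ha (Nat.le_add_right _ _)
  have hb' : (⇑D)^[N] b = 0 := myIterStable D hb (Nat.le_add_left _ _)
  -- nilpotency of the product
  have hab : (⇑D)^[N] (a * b) = 0 := by
    rw [myIterLeibniz']
    refine Finset.sum_eq_zero fun i hi => ?_
    rcases le_or_gt na i with h | h
    · rw [myIterStable D ha h, zero_mul, smul_zero]
    · have : nb ≤ N - i := by omega
      rw [myIterStable D hb this, mul_zero, smul_zero]
  -- the common term
  set f : ℕ → ℕ → A := fun s t =>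
    ((-1 : K) ^ (s + t) * ((s.factorial * t.factorial : ℕ) : K)⁻¹) •
      (Q ^ (s + t) * ((⇑D)^[s] a * (⇑D)^[t] b)) with hf
  have hf0 : ∀ s t, N ≤ s + t → f s t = 0 := by
    intro s t hst
    rcases le_or_gt na s with h | h
    · simp [hf, myIterStable D ha h]
    · have : nb ≤ t := by omega
      simp [hf, myIterStable D hb this]
  have lhs : S (a * b) = ∑ r ∈ range N, ∑ s ∈ range (r + 1), f s (r - s) := by
    rw [hS _ N hab]
    refine Finset.sum_congr rfl fun r hr => ?_
    rw [myIterLeibniz', Finset.mul_sum, Finset.smul_sum]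
    refine Finset.sum_congr rfl fun s hs => ?_
    simp only [Finset.mem_range] at hs
    have hsr : s ≤ r := by omega
    have hadd : s + (r - s) = r := by omega
    rw [hf]
    simp only [hadd]
    rw [mul_smul_comm, ← Nat.cast_smul_eq_nsmul K, smul_smul]
    congr 1
    have key : (r.choose s) * s.factorial * (r - s).factorial = r.factorial :=
      Nat.choose_mul_factorial_mul_factorial hsr
    have h1 : (r.factorial : K) ≠ 0 := Nat.cast_ne_zero.2 (Nat.factorial_ne_zero r)
    have h2 : ((s.factorial * (r - s).factorial : ℕ) : K) ≠ 0 :=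
      Nat.cast_ne_zero.2 (by positivity)
    rw [← key]
    push_cast
    have h3 : (s.factorial : K) ≠ 0 := Nat.cast_ne_zero.2 (Nat.factorial_ne_zero s)
    have h4 : ((r-s).factorial : K) ≠ 0 := Nat.cast_ne_zero.2 (Nat.factorial_ne_zero _)
    have h5 : ((r.choose s : ℕ) : K) ≠ 0 := Nat.cast_ne_zero.2 (Nat.choose_pos hsr).ne'
    field_simp
  have rhs : S a * S b = ∑ s ∈ range N, ∑ t ∈ range N, f s t := by
    rw [hS _ N ha', hS _ N hb', Finset.sum_mul_sum]
    refine Finset.sum_congr rfl fun s _ => Finset.sum_congr rfl fun t _ => ?_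
    rw [hf]
    rw [smul_mul_smul_comm]
    congr 1
    · push_cast [pow_add, mul_inv]
      ring
    · rw [pow_add]; ring
  rw [lhs, rhs, myTriangle N f hf0]
end
end Aux

-- foldr helpers
theorem foldr_comp_apply {A : Type*} (l : List (A → A)) (x : A) :
    (l.foldr (· ∘ ·) id) x = l.foldr (fun f y => f y) x := by
  induction l with
  | nil => rfl
  | cons f t ih => simp [List.foldr_cons, Function.comp_apply, ih]

/-- Given locally nilpotent derivations `D₁, …, D_k` and elements `Q₁, …, Q_k`
with `D_i Q_j = 0` for `i > j` and `D_j Q_j = 1`, the composition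
`P = S₁ ∘ S₂ ∘ ⋯ ∘ S_k` of the associated homomorphisms kills every `Q_j`, and
hence the ideal generated by `Q₁, …, Q_k` lies in the kernel of `P`. -/
theorem stmt_9
    (K : Type*) [Field K] [CharZero K]
    (A : Type*) [CommRing A] [Algebra K A]
    (k : ℕ) (D : Fin k → Derivation K A A) (Q : Fin k → A)
    (hD : ∀ (i : Fin k) (a : A), ∃ n : ℕ, (⇑(D i))^[n] a = 0)
    (hQ0 : ∀ i j : Fin k, j < i → D i (Q j) = 0)
    (hQ1 : ∀ j : Fin k, D j (Q j) = 1)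
    (S : Fin k → A → A)
    (hS : ∀ (j : Fin k) (a : A) (n : ℕ), (⇑(D j))^[n] a = 0 →
      S j a = ∑ r ∈ Finset.range n,
        ((-1 : K) ^ r * (r.factorial : K)⁻¹) • (Q j ^ r * (⇑(D j))^[r] a))
    (P : A → A) (hP : P = (List.ofFn S).foldr (· ∘ ·) id) :
    (∀ j : Fin k, P (Q j) = 0) ∧
    ∀ a ∈ Ideal.span (Set.range Q), P a = 0 := by
  -- basic facts about S
  have S0 : ∀ i, S i 0 = 0 := fun i => myS_zero (D i) (Q i) (S i) (hS i)
  have Sadd : ∀ i a b, S i (a + b) = S i a + S i b := by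
    intro i a b
    obtain ⟨na, hna⟩ := hD i a
    obtain ⟨nb, hnb⟩ := hD i b
    exact myS_add (D i) (Q i) (S i) (hS i) a b na nb hna hnb
  have Smul : ∀ i a b, S i (a * b) = S i a * S i b := by
    intro i a b
    obtain ⟨na, hna⟩ := hD i a
    obtain ⟨nb, hnb⟩ := hD i b
    exact myS_mul (D i) (Q i) (S i) (hS i) a b na nb hna hnb
  have Sfix : ∀ i j : Fin k, j < i → S i (Q j) = Q j := by
    intro i j h
    rw [hS i (Q j) 1 (by simp [hQ0 i j h])]
    simp
  have SQ : ∀ j : Fin k, S j (Q j) = 0 := by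
    intro j
    have h2 : (⇑(D j))^[2] (Q j) = 0 := by
      show (⇑(D j))^[1+1] (Q j) = 0
      rw [Function.iterate_add_apply]
      simp [hQ1 j]
    rw [hS j (Q j) 2 h2]
    rw [show (2:ℕ) = 1 + 1 from rfl, Finset.sum_range_succ, Finset.sum_range_one]
    simp [hQ1 j]
  -- P as a foldr over finRange
  have hPapp : ∀ x, P x = (List.finRange k).foldr (fun i y => S i y) x := by
    intro x
    rw [hP, List.ofFn_eq_map, foldr_comp_apply, List.foldr_map]
  -- generic foldr lemmas
  have fold0 : ∀ l : List (Fin k), l.foldr (fun i y => S i y) (0:A) = 0 := by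
    intro l; induction l with
    | nil => rfl
    | cons i t ih => simp [List.foldr_cons, ih, S0]
  have foldadd : ∀ (l : List (Fin k)) (a b : A),
      l.foldr (fun i y => S i y) (a + b)
        = l.foldr (fun i y => S i y) a + l.foldr (fun i y => S i y) b := by
    intro l; induction l with
    | nil => intro a b; rfl
    | cons i t ih => intro a b; simp [List.foldr_cons, ih, Sadd]
  have foldmul : ∀ (l : List (Fin k)) (a b : A),
      l.foldr (fun i y => S i y) (a * b)
        = l.foldr (fun i y => S i y) a * l.foldr (fun i y => S i y) b := by
    intro l; induction l with
    | nil => intro a b; rfl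
    | cons i t ih => intro a b; simp [List.foldr_cons, ih, Smul]
  have foldfix : ∀ (j : Fin k) (l : List (Fin k)), (∀ m ∈ l, j < m) →
      l.foldr (fun i y => S i y) (Q j) = Q j := by
    intro j l
    induction l with
    | nil => intro _; rfl
    | cons i t ih =>
      intro h
      rw [List.foldr_cons, ih (fun m hm => h m (List.mem_cons_of_mem i hm))]
      exact Sfix i j (h i (List.mem_cons_self))
  have foldkill : ∀ (j : Fin k) (l : List (Fin k)), l.Pairwise (· < ·) → j ∈ l →
      l.foldr (fun i y => S i y) (Q j) = 0 := by
    intro j l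
    induction l with
    | nil => intro _ h; simp at h
    | cons i t ih =>
      intro hp hm
      rw [List.pairwise_cons] at hp
      rw [List.foldr_cons]
      rcases List.mem_cons.1 hm with rfl | hm'
      · rw [foldfix j t hp.1, SQ]
      · rw [ih hp.2 hm', S0]
  have hPQ : ∀ j : Fin k, P (Q j) = 0 := by
    intro j
    rw [hPapp]
    exact foldkill j (List.finRange k) (List.pairwise_lt_finRange k) (List.mem_finRange j)
  refine ⟨hPQ, ?_⟩
  intro a ha
  have P0 : P 0 = 0 := by rw [hPapp]; exact fold0 _
  have Padd : ∀ a b, P (a + b) = P a + P b := by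
    intro a b; rw [hPapp, hPapp, hPapp]; exact foldadd _ a b
  have Pmul : ∀ a b, P (a * b) = P a * P b := by
    intro a b; rw [hPapp, hPapp, hPapp]; exact foldmul _ a b
  refine Submodule.span_induction ?_ P0 (fun x y _ _ hx hy => by rw [Padd, hx, hy, add_zero])
    (fun c x _ hx => by rw [smul_eq_mul, Pmul, hx, mul_zero]) ha
  rintro x ⟨j, rfl⟩
  exact hPQ j
end

section
/- Let K be a field of characteristic zero, A a commutative K-algebra, and let D₁, …, D_k be locally nilpotent K-derivations of A together with elements Q₁, …, Q_k ∈ A satisfying: D_i(Q_j) = 0 whenever i > j, D_j(Q_j) = 1 for each j, and for all s < t the commutator [D_t, D_s] = D_t ∘ D_s − D_s ∘ D_t lies in the K-linear span of {D_u : u > t} inside the space of K-linear endomorphisms of A. For each j let S_j : A → A be the map S_j(a) = Σ_{r≥0} (−1)^r (r!)^{−1} Q_j^r D_j^r(a), and set P = S₁ ∘ S₂ ∘ ⋯ ∘ S_k. Then: (1) D_i(P(a)) = 0 for every a ∈ A and every 1 ≤ i ≤ k; and (2) P(a) = a whenever D_i(a) = 0 for all 1 ≤ i ≤ k. In particular P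 is a K-algebra homomorphism of A onto its subalgebra of common (D₁, …, D_k)-invariants, identical on that subalgebra. -/
/-- Given locally nilpotent derivations `D₁, …, D_k` and elements `Q₁, …, Q_k`
with `D_i Q_j = 0` for `i > j`, `D_j Q_j = 1`, and such that for `s < t` the
commutator `[D_t, D_s]` lies in the `K`-span of `{D_u : u > t}`, the composition
`P = S₁ ∘ ⋯ ∘ S_k` of the associated homomorphisms satisfies `D_i (P a) = 0` for
all `a` and `i`, and `P a = a` whenever all `D_i a = 0`. -/
theorem stmt_10
    (K : Type*) [Field K] [CharZero K]
    (A : Type*) [CommRing A] [Algebra K A]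
    (k : ℕ) (D : Fin k → Derivation K A A) (Q : Fin k → A)
    (hD : ∀ (i : Fin k) (a : A), ∃ n : ℕ, (⇑(D i))^[n] a = 0)
    (hQ0 : ∀ i j : Fin k, j < i → D i (Q j) = 0)
    (hQ1 : ∀ j : Fin k, D j (Q j) = 1)
    (hcomm : ∀ s t : Fin k, s < t → ∃ c : Fin k → K,
      (∀ u : Fin k, u ≤ t → c u = 0) ∧
      ((D t : A →ₗ[K] A) ∘ₗ (D s : A →ₗ[K] A) - (D s : A →ₗ[K] A) ∘ₗ (D t : A →ₗ[K] A))
        = ∑ u : Fin k, c u • (D u : A →ₗ[K] A))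
    (S : Fin k → A → A)
    (hS : ∀ (j : Fin k) (a : A) (n : ℕ), (⇑(D j))^[n] a = 0 →
      S j a = ∑ r ∈ Finset.range n,
        ((-1 : K) ^ r * (r.factorial : K)⁻¹) • (Q j ^ r * (⇑(D j))^[r] a))
    (P : A → A) (hP : P = (List.ofFn S).foldr (· ∘ ·) id) :
    (∀ (a : A) (i : Fin k), D i (P a) = 0) ∧
    ∀ a : A, (∀ i : Fin k, D i a = 0) → P a = a := by
  -- Lemma A: commutator-stability of iterates
  have lemA : ∀ (j : Fin k) (b : A), (∀ u : Fin k, j < u → D u b = 0) →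
      ∀ (r : ℕ) (i : Fin k), j < i → D i ((⇑(D j))^[r] b) = 0 := by
    intro j b hb r
    induction r with
    | zero => intro i hi; simpa using hb i hi
    | succ r ih =>
      intro i hi
      rw [Function.iterate_succ_apply']
      obtain ⟨c, hc0, hc⟩ := hcomm j i hi
      have h2 := congrArg (fun L : A →ₗ[K] A => L ((⇑(D j))^[r] b)) hc
      simp only [LinearMap.sub_apply, LinearMap.comp_apply, LinearMap.sum_apply,
        LinearMap.smul_apply, Derivation.coeFn_coe] at h2
      have h3 : D i ((⇑(D j))^[r] b) = 0 := ih i hi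
      have h4 : ∀ u : Fin k, c u • D u ((⇑(D j))^[r] b) = 0 := by
        intro u
        by_cases hu : u ≤ i
        · rw [hc0 u hu, zero_smul]
        · rw [ih u (lt_trans hi (lt_of_not_ge hu)), smul_zero]
      rw [h3, map_zero] at h2
      have := sub_eq_iff_eq_add.mp h2
      rw [this, Finset.sum_eq_zero (fun u _ => h4 u), zero_add]
  -- Lemma B: D j (S j b) = 0
  have lemB : ∀ (j : Fin k) (b : A), D j (S j b) = 0 := by
    intro j b
    obtain ⟨n, hn⟩ := hD j b
    have hm : (⇑(D j))^[n + 1] b = 0 := by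
      rw [Function.iterate_succ_apply', hn, map_zero]
    rw [hS j b (n + 1) hm, map_sum]
    set F : ℕ → A := fun r =>
      ((-1 : K) ^ r * (r.factorial : K)⁻¹) • (Q j ^ r * (⇑(D j))^[r + 1] b) with hF
    set G : ℕ → A := fun r => match r with | 0 => 0 | r + 1 => F r with hG
    have key : ∀ r : ℕ,
        D j (((-1 : K) ^ r * (r.factorial : K)⁻¹) • (Q j ^ r * (⇑(D j))^[r] b))
          = G (r + 1) - G r := by
      intro r
      rw [Derivation.map_smul, Derivation.leibniz, Derivation.leibniz_pow, hQ1,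
        ← Function.iterate_succ_apply' (⇑(D j)) r b]
      match r with
      | 0 =>
        simp [hG, hF, smul_smul]
      | s + 1 =>
        have h2 : ((s.factorial : K)) ≠ 0 := Nat.cast_ne_zero.mpr (Nat.factorial_ne_zero _)
        have h3 : ((s : K) + 1) ≠ 0 := Nat.cast_add_one_ne_zero s
        have hfact : (((s + 1).factorial : K)) = ((s : K) + 1) * (s.factorial : K) := by
          rw [Nat.factorial_succ]; push_cast; ring
        have hsc : ((-1 : K) ^ (s + 1) * (((s + 1).factorial : K))⁻¹) * ((s + 1 : ℕ) : K)
            = -((-1 : K) ^ s * (s.factorial : K)⁻¹) := by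
          rw [hfact, pow_succ]
          push_cast
          field_simp
        have expand : (Q j ^ (s + 1)) • ((⇑(D j))^[s + 1 + 1] b)
            + ((⇑(D j))^[s + 1] b) • ((s + 1 : ℕ) • (Q j ^ (s + 1 - 1)) • (1 : A))
            = (Q j ^ (s + 1)) * ((⇑(D j))^[s + 1 + 1] b)
              + ((s + 1 : ℕ) : K) • (Q j ^ s * (⇑(D j))^[s + 1] b) := by
          rw [Nat.cast_smul_eq_nsmul]
          simp only [smul_eq_mul, nsmul_eq_mul]
          push_cast
          ring
        rw [expand, smul_add, smul_smul, hsc, neg_smul]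
        simp only [hG, hF]
        rw [sub_eq_add_neg]
    rw [Finset.sum_congr rfl (fun r _ => key r), Finset.sum_range_sub]
    simp only [hG, hF, hm, mul_zero, smul_zero, sub_zero]
  -- Lemma C: D i (S j b) = 0 for i > j when b is killed by all D u, u > j
  have lemC : ∀ (j i : Fin k) (b : A), j < i → (∀ u : Fin k, j < u → D u b = 0) →
      D i (S j b) = 0 := by
    intro j i b hij hb
    obtain ⟨n, hn⟩ := hD j b
    rw [hS j b n hn, map_sum]
    refine Finset.sum_eq_zero fun r _ => ?_
    rw [Derivation.map_smul, Derivation.leibniz, Derivation.leibniz_pow, hQ0 i j hij,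
      lemA j b hb r i hij]
    simp
  -- main downward induction
  have main : ∀ m j : ℕ, j + m = k →
      (∀ a : A, ∀ i : Fin k, j ≤ i.1 →
        D i (((List.ofFn S).drop j).foldr (· ∘ ·) id a) = 0) ∧
      (∀ a : A, (∀ i : Fin k, j ≤ i.1 → D i a = 0) →
        ((List.ofFn S).drop j).foldr (· ∘ ·) id a = a) := by
    intro m
    induction m with
    | zero =>
      intro j hj
      have hdrop : (List.ofFn S).drop j = [] :=
        List.drop_eq_nil_of_le (by simp; omega)
      rw [hdrop]
      constructor
      · intro a i hi
        exact absurd i.2 (by omega)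
      · intro a _; rfl
    | succ m ih =>
      intro j hj
      have hjk : j < k := by omega
      have hdrop : (List.ofFn S).drop j = S ⟨j, hjk⟩ :: (List.ofFn S).drop (j + 1) := by
        rw [List.drop_eq_getElem_cons (by simpa using hjk)]
        congr 1
        simp
      obtain ⟨IH1, IH2⟩ := ih (j + 1) (by omega)
      rw [hdrop]
      simp only [List.foldr_cons]
      constructor
      · intro a i hi
        set b := ((List.ofFn S).drop (j + 1)).foldr (· ∘ ·) id a with hb
        have hbu : ∀ u : Fin k, (⟨j, hjk⟩ : Fin k) < u → D u b = 0 := by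
          intro u hu
          exact IH1 a u (by simpa [Fin.lt_def] using hu)
        show D i (S ⟨j, hjk⟩ b) = 0
        rcases eq_or_lt_of_le hi with heq | hlt
        · have hieq : i = ⟨j, hjk⟩ := by
            apply Fin.ext; show i.1 = j; omega
          rw [hieq]
          exact lemB _ b
        · exact lemC ⟨j, hjk⟩ i b (by simpa [Fin.lt_def] using hlt) hbu
      · intro a ha
        have h1 : ((List.ofFn S).drop (j + 1)).foldr (· ∘ ·) id a = a :=
          IH2 a (fun i hi => ha i (by omega))
        show S ⟨j, hjk⟩ (((List.ofFn S).drop (j + 1)).foldr (· ∘ ·) id a) = a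
        rw [h1]
        have hD0 : (⇑(D ⟨j, hjk⟩))^[1] a = 0 := by
          simpa using ha ⟨j, hjk⟩ le_rfl
        rw [hS _ a 1 hD0]
        simp
  obtain ⟨M1, M2⟩ := main k 0 (by omega)
  rw [List.drop_zero] at M1 M2
  constructor
  · intro a i
    rw [hP]
    exact M1 a i (Nat.zero_le _)
  · intro a ha
    rw [hP]
    exact M2 a (fun i _ => ha i)
end
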